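/- Let σ be a positive natural number, δt ∈ ℝ and c ∈ ℝ. For u ∈ L²(ℝ; ℂ), define the Lie splitting step: ũ(x) := exp(i δt |u(x)|^{2σ}) u(x) and u' := 𝓕⁻¹(ξ ↦ e^{−i c |ξ|²} · 𝓕ũ(ξ)). Then ũ ∈ L²(ℝ; ℂ) and the discrete charge conservation law holds: ‖u'‖_{L²} = ‖u‖_{L²} (Proposition 3.4, charge conservation of the Lie splitting scheme, applied pathwise with c the Brownian increment δW_n). -/

import Mathlib

open MeasureTheory Complex Real
open scoped ENNReal NNReal FourierTransform ComplexConjugate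

noncomputable section

/-- `L²(ℝ; ℂ)`. -/
abbrev L2 : Type := Lp ℂ 2 (volume : Measure ℝ)

/-- `F` is the Fourier–Plancherel transform on `L²(ℝ; ℂ)`: a unitary operator that agrees
with the Fourier integral `𝓕 f (ξ) = ∫ e^{−2πixξ} f(x) dx` on `L¹ ∩ L²`. -/
def IsFourierPlancherel (F : L2 ≃ₗᵢ[ℂ] L2) : Prop :=
  ∀ (f : ℝ → ℂ) (_ : Integrable f (volume : Measure ℝ))
    (hf2 : MemLp f 2 (volume : Measure ℝ)),
    (F (hf2.toLp f) : ℝ → ℂ) =ᵐ[volume] 𝓕 f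

/-- Multiplication by a bounded continuous symbol maps `L²` to `L²`. -/
lemma memℒp_mul_symbol (m : ℝ → ℂ) (hm : Continuous m) (hm1 : ∀ ξ, ‖m ξ‖ ≤ 1)
    (g : L2) : MemLp (fun ξ => m ξ * (g : ℝ → ℂ) ξ) 2 (volume : Measure ℝ) := by
  refine ⟨hm.aestronglyMeasurable.mul (Lp.aestronglyMeasurable g), ?_⟩
  refine lt_of_le_of_lt (eLpNorm_mono fun x => ?_) (Lp.eLpNorm_lt_top g)
  rw [norm_mul]
  calc ‖m x‖ * ‖(g : ℝ → ℂ) x‖ ≤ 1 * ‖(g : ℝ → ℂ) x‖ := by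
        gcongr; exact hm1 x
    _ = ‖(g : ℝ → ℂ) x‖ := one_mul _

/-- The Fourier multiplier operator `f ↦ 𝓕⁻¹ (m ⬝ 𝓕 f)` with bounded continuous symbol. -/
def fourierMult (F : L2 ≃ₗᵢ[ℂ] L2) (m : ℝ → ℂ) (hm : Continuous m)
    (hm1 : ∀ ξ, ‖m ξ‖ ≤ 1) (f : L2) : L2 :=
  F.symm ((memℒp_mul_symbol m hm hm1 (F f)).toLp _)

/-- The squared `H^s` norm `‖f‖²_{H^s} = ∫ (1+|ξ|²)^s |𝓕f(ξ)|² dξ ∈ [0,∞]`. -/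
def HsNormSq (F : L2 ≃ₗᵢ[ℂ] L2) (s : ℝ) (f : L2) : ℝ≥0∞ :=
  ∫⁻ ξ : ℝ, ENNReal.ofReal ((1 + |ξ| ^ 2) ^ s) * (‖(F f : ℝ → ℂ) ξ‖₊ : ℝ≥0∞) ^ 2

/-- The `H^s` norm `‖f‖_{H^s} ∈ [0,∞]`. -/
def HsNorm (F : L2 ≃ₗᵢ[ℂ] L2) (s : ℝ) (f : L2) : ℝ≥0∞ :=
  HsNormSq F s f ^ (1 / 2 : ℝ)

lemma Sprop_symbol_cont (τ : ℝ) :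
    Continuous fun ξ : ℝ => Complex.exp (-Complex.I * (τ : ℂ) * (ξ : ℂ) ^ 2) := by
  fun_prop

lemma Sprop_symbol_norm (τ : ℝ) (ξ : ℝ) :
    ‖Complex.exp (-Complex.I * (τ : ℂ) * (ξ : ℂ) ^ 2)‖ ≤ 1 := by
  have h : -Complex.I * (τ : ℂ) * (ξ : ℂ) ^ 2 = ((-(τ * ξ ^ 2) : ℝ) : ℂ) * Complex.I := by
    push_cast; ring
  rw [h, Complex.norm_exp_ofReal_mul_I]

/-- The linear propagator `S_τ = 𝓕⁻¹ e^{−iτ|ξ|²} 𝓕` of `i du + Δu ∘ dW = 0`. -/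
def Sprop (F : L2 ≃ₗᵢ[ℂ] L2) (τ : ℝ) : L2 → L2 :=
  fourierMult F (fun ξ : ℝ => Complex.exp (-Complex.I * (τ : ℂ) * (ξ : ℂ) ^ 2))
    (Sprop_symbol_cont τ) (Sprop_symbol_norm τ)
lemma norm_phase (δt : ℝ) (σ : ℕ) (z : ℂ) :
    ‖Complex.exp (Complex.I * (δt : ℂ) * ((Complex.normSq z : ℝ) : ℂ) ^ σ) * z‖ = ‖z‖ := by
  rw [norm_mul]
  have h : Complex.I * (δt : ℂ) * ((Complex.normSq z : ℝ) : ℂ) ^ σ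
      = ((δt * (Complex.normSq z) ^ σ : ℝ) : ℂ) * Complex.I := by
    push_cast; ring
  rw [h, Complex.norm_exp_ofReal_mul_I, one_mul]

lemma norm_Sprop (F : L2 ≃ₗᵢ[ℂ] L2) (τ : ℝ) (f : L2) : ‖Sprop F τ f‖ = ‖f‖ := by
  rw [Sprop, fourierMult, F.symm.norm_map, Lp.norm_toLp]
  have h : eLpNorm (fun ξ : ℝ => Complex.exp (-Complex.I * (τ : ℂ) * (ξ : ℂ) ^ 2)
      * (F f : ℝ → ℂ) ξ) 2 volume = eLpNorm (F f : ℝ → ℂ) 2 volume := by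
    apply eLpNorm_congr_norm_ae
    filter_upwards with ξ
    rw [norm_mul]
    have h2 : -Complex.I * (τ : ℂ) * (ξ : ℂ) ^ 2 = ((-(τ * ξ ^ 2) : ℝ) : ℂ) * Complex.I := by
      push_cast; ring
    rw [h2, Complex.norm_exp_ofReal_mul_I, one_mul]
  rw [h, ← Lp.norm_def, F.norm_map]

/-- discrete charge conservation of the Lie splitting scheme: the nonlinear
step `ũ(x) = exp(i δt |u(x)|^{2σ}) u(x)` stays in `L²`, and the full step
`u' = 𝓕⁻¹(e^{−ic|ξ|²} 𝓕 ũ)` satisfies `‖u'‖_{L²} = ‖u‖_{L²}`. -/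
theorem stmt_11 (F : L2 ≃ₗᵢ[ℂ] L2) (hF : IsFourierPlancherel F)
    (σ : ℕ) (hσ : 0 < σ) (δt : ℝ) (c : ℝ) (u : L2)
    (utld : ℝ → ℂ)
    (hutld : ∀ x : ℝ, utld x
      = Complex.exp (Complex.I * (δt : ℂ) * ((Complex.normSq ((u : ℝ → ℂ) x) : ℝ) : ℂ) ^ σ)
        * (u : ℝ → ℂ) x) :
    MemLp utld 2 (volume : Measure ℝ)
    ∧ ∀ h : MemLp utld 2 (volume : Measure ℝ),
        ‖Sprop F c (h.toLp utld)‖ = ‖u‖ := by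
  have hnorm : ∀ x : ℝ, ‖utld x‖ = ‖(u : ℝ → ℂ) x‖ := fun x => by
    rw [hutld x]; exact norm_phase δt σ _
  have heq : eLpNorm utld 2 volume = eLpNorm (u : ℝ → ℂ) 2 volume :=
    eLpNorm_congr_norm_ae (Filter.Eventually.of_forall hnorm)
  have hmeas : AEStronglyMeasurable utld volume := by
    have hc : Continuous fun z : ℂ =>
        Complex.exp (Complex.I * (δt : ℂ) * ((Complex.normSq z : ℝ) : ℂ) ^ σ) * z := by
      have h1 : Continuous fun z : ℂ => ((Complex.normSq z : ℝ) : ℂ) :=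
        Complex.continuous_ofReal.comp Complex.continuous_normSq
      exact (Complex.continuous_exp.comp ((continuous_const.mul (h1.pow σ)))).mul continuous_id
    have : utld = (fun z : ℂ =>
        Complex.exp (Complex.I * (δt : ℂ) * ((Complex.normSq z : ℝ) : ℂ) ^ σ) * z)
        ∘ (u : ℝ → ℂ) := funext hutld
    rw [this]
    exact hc.comp_aestronglyMeasurable (Lp.aestronglyMeasurable u)
  have hmem : MemLp utld 2 (volume : Measure ℝ) :=
    ⟨hmeas, heq ▸ Lp.eLpNorm_lt_top u⟩
  refine ⟨hmem, fun h => ?_⟩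
  rw [norm_Sprop, Lp.norm_toLp, heq, ← Lp.norm_def]

end
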